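/- Fix d ≥ 2 and 0 ≤ k ≤ d-1 with gcd(k-1, d) = 1. Let f_k(A_0,…,A_{d-1}) ∈ Q[A_0,…,A_{d-1}] be obtained by writing the x^{Nd-k}-coefficient of (x^d + A_{d-1}x^{d-1}+…+A_0)^N as a polynomial in N with coefficients in Q[A_0,…,A_{d-1}] and evaluating at N = (k-1)/d. Then f_k is not the zero polynomial; indeed its coefficient of A_{d-1}^k equals the generalized binomial coefficient C((k-1)/d, k), which is nonzero. -/

import Mathlib

open Polynomial

/-- The polynomial `f_k ∈ Q[A_0,…,A_{d-1}]`: evaluate the polynomial-in-`N` expression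
`Σ_{ℓ=0}^k C(N,ℓ)·[(Th(T))^ℓ]_{T^k}` for the `x^{Nd-k}`-coefficient of `F(x)^N` at
`N = (k-1)/d`, where `h(T) = A_{d-1} + A_{d-2}T + … + A_0T^{d-1}` and
`C(α,ℓ) = α(α-1)⋯(α-ℓ+1)/ℓ!` is the generalized binomial coefficient. -/
noncomputable def fk (d k : ℕ) : MvPolynomial (Fin d) ℚ :=
  ∑ ℓ ∈ Finset.range (k + 1),
    MvPolynomial.C ((∏ j ∈ Finset.range ℓ, (((k : ℚ) - 1) / (d : ℚ) - (j : ℚ))) /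
        (Nat.factorial ℓ : ℚ)) *
      Polynomial.coeff
        ((Polynomial.X *
            ∑ i : Fin d, Polynomial.C (MvPolynomial.X i) *
              Polynomial.X ^ (d - 1 - (i : ℕ))) ^ ℓ) k

lemma hcoeff_hom (d : ℕ) (ℓ m : ℕ) :
    MvPolynomial.IsHomogeneous
      (((∑ i : Fin d, Polynomial.C (MvPolynomial.X i) *
        Polynomial.X ^ (d - 1 - (i : ℕ)) : Polynomial (MvPolynomial (Fin d) ℚ)) ^ ℓ).coeff m)
      ℓ := by
  induction ℓ generalizing m with
  | zero =>
    simp only [pow_zero, Polynomial.coeff_one]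
    split
    · exact MvPolynomial.isHomogeneous_one _ _
    · exact MvPolynomial.isHomogeneous_zero _ _ _
  | succ n ih =>
    rw [pow_succ, Polynomial.coeff_mul]
    apply MvPolynomial.IsHomogeneous.sum
    intro p hp
    have hbase : MvPolynomial.IsHomogeneous
        (((∑ i : Fin d, Polynomial.C (MvPolynomial.X i) *
        Polynomial.X ^ (d - 1 - (i : ℕ)) : Polynomial (MvPolynomial (Fin d) ℚ))).coeff p.2)
        1 := by
      rw [Polynomial.finset_sum_coeff]
      apply MvPolynomial.IsHomogeneous.sum
      intro i _
      rw [Polynomial.coeff_C_mul, Polynomial.coeff_X_pow]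
      split
      · simpa using MvPolynomial.isHomogeneous_X ℚ i
      · simpa using MvPolynomial.isHomogeneous_zero _ _ 1
    exact (ih p.1).mul hbase

theorem stmt14 (d k : ℕ) (hd : 2 ≤ d) (hk : k ≤ d - 1)
    (hgcd : Int.gcd ((k : ℤ) - 1) (d : ℤ) = 1) :
    fk d k ≠ 0 ∧
    MvPolynomial.coeff (Finsupp.single (⟨d - 1, by omega⟩ : Fin d) k) (fk d k) =
      (∏ j ∈ Finset.range k, (((k : ℚ) - 1) / (d : ℚ) - (j : ℚ))) / (Nat.factorial k : ℚ) ∧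
    (∏ j ∈ Finset.range k, (((k : ℚ) - 1) / (d : ℚ) - (j : ℚ))) / (Nat.factorial k : ℚ) ≠ 0 := by
  set v : Fin d := ⟨d - 1, by omega⟩ with hv
  set h : Polynomial (MvPolynomial (Fin d) ℚ) :=
    ∑ i : Fin d, Polynomial.C (MvPolynomial.X i) * Polynomial.X ^ (d - 1 - (i : ℕ)) with hh
  -- constant coefficient of h is X v
  have hconst : h.coeff 0 = MvPolynomial.X v := by
    rw [hh, Polynomial.finset_sum_coeff]
    rw [Finset.sum_eq_single v]
    · simp [v]
    · intro i _ hi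
      rw [Polynomial.coeff_C_mul, Polynomial.coeff_X_pow]
      have hne : (i : ℕ) ≠ d - 1 := fun hc => hi (Fin.ext hc)
      have hlt : (i : ℕ) < d := i.isLt
      rw [if_neg (by omega), mul_zero]
    · intro hmem
      exact absurd (Finset.mem_univ v) hmem
  -- coefficient of the ℓ-th term at the monomial
  have hcoeff : MvPolynomial.coeff (Finsupp.single v k) (fk d k) =
      (∏ j ∈ Finset.range k, (((k : ℚ) - 1) / (d : ℚ) - (j : ℚ))) / (Nat.factorial k : ℚ) := by
    rw [fk]
    rw [MvPolynomial.coeff_sum]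
    rw [Finset.sum_range_succ]
    have hzero : ∀ ℓ ∈ Finset.range k,
        MvPolynomial.coeff (Finsupp.single v k)
          (MvPolynomial.C ((∏ j ∈ Finset.range ℓ, (((k : ℚ) - 1) / (d : ℚ) - (j : ℚ))) /
              (Nat.factorial ℓ : ℚ)) * ((Polynomial.X * h) ^ ℓ).coeff k) = 0 := by
      intro ℓ hℓ
      rw [Finset.mem_range] at hℓ
      rw [mul_pow, Polynomial.coeff_X_pow_mul' ]
      rw [if_pos hℓ.le]
      rw [MvPolynomial.coeff_C_mul]
      have := (hcoeff_hom d ℓ (k - ℓ)).coeff_eq_zero (d := Finsupp.single v k)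
        (by
          have hdeg : (Finsupp.single v k).degree = k := by
            rw [Finsupp.degree_single]
          omega)
      rw [← hh] at this
      rw [this, mul_zero]
    rw [Finset.sum_eq_zero hzero, zero_add]
    -- ℓ = k term
    have hk0 : ((Polynomial.X * h) ^ k).coeff k = MvPolynomial.X v ^ k := by
      rw [mul_pow]
      have := Polynomial.coeff_X_pow_mul (h ^ k) k 0
      rw [zero_add] at this
      rw [this]
      have : (h ^ k).coeff 0 = (h.coeff 0) ^ k := by
        have := map_pow (Polynomial.constantCoeff) h k
        simpa [Polynomial.constantCoeff_apply] using this
      rw [this, hconst]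
    rw [hk0, MvPolynomial.X_pow_eq_monomial, MvPolynomial.coeff_C_mul,
      MvPolynomial.coeff_monomial, if_pos rfl, mul_one]
  -- nonvanishing of the generalized binomial coefficient
  have hC : (∏ j ∈ Finset.range k, (((k : ℚ) - 1) / (d : ℚ) - (j : ℚ))) /
      (Nat.factorial k : ℚ) ≠ 0 := by
    apply div_ne_zero
    · rw [Finset.prod_ne_zero_iff]
      intro j hj
      rw [Finset.mem_range] at hj
      intro hc
      have hd0 : (d : ℚ) ≠ 0 := by positivity
      have : (k : ℚ) - 1 = j * d := by
        field_simp at hc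
        linarith [hc]
      have hz : (k : ℤ) - 1 = j * d := by exact_mod_cast this
      have hdvd : (d : ℤ) ∣ ((k : ℤ) - 1) := ⟨j, by linarith [hz]⟩
      have : (d : ℤ) ∣ (Int.gcd ((k : ℤ) - 1) (d : ℤ) : ℤ) :=
        Int.dvd_coe_gcd hdvd dvd_rfl
      rw [hgcd] at this
      have := Int.le_of_dvd one_pos this
      omega
    · exact_mod_cast Nat.factorial_ne_zero k
  refine ⟨?_, hcoeff, hC⟩
  intro hzero
  rw [hzero, MvPolynomial.coeff_zero] at hcoeff
  exact hC hcoeff.symm
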